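/- Let λ ∈ ℝ, g, h : [0,∞) → ℝ continuous with h(0)=0, and f continuous satisfying f(t) - f(0) = ∫_0^t (λ f(s) + g(s)) ds + h(t) for all t ≥ 0. Then f(t) = e^{λt}( f(0) + ∫_0^t e^{-λs}(g(s) + λ h(s)) ds ) + h(t). -/

import Mathlib

theorem stmt6 (lam : ℝ) (f g h : ℝ → ℝ)
    (hf : ContinuousOn f (Set.Ici 0)) (hg : ContinuousOn g (Set.Ici 0))
    (hh : ContinuousOn h (Set.Ici 0)) (hh0 : h 0 = 0)
    (heq : ∀ t : ℝ, 0 ≤ t →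
      f t - f 0 = (∫ s in (0:ℝ)..t, (lam * f s + g s)) + h t) :
    ∀ t : ℝ, 0 ≤ t →
      f t = Real.exp (lam * t) *
          (f 0 + ∫ s in (0:ℝ)..t, Real.exp (-lam * s) * (g s + lam * h s)) + h t := by
  intro t ht
  set φ : ℝ → ℝ := fun s => lam * f s + g s with hφ
  set ψ : ℝ → ℝ := fun s => Real.exp (-lam * s) * (g s + lam * h s) with hψ
  set v : ℝ → ℝ := fun x => Real.exp (-lam * x) * (f x - h x) with hv
  have hφc : ContinuousOn φ (Set.Ici 0) :=
    (continuousOn_const.mul hf).add hg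
  have hψc : ContinuousOn ψ (Set.Ici 0) := by
    exact ((Real.continuous_exp.comp (continuous_const.mul continuous_id)).continuousOn).mul
      (hg.add (continuousOn_const.mul hh))
  have hvc : ContinuousOn v (Set.Ici 0) :=
    ((Real.continuous_exp.comp (continuous_const.mul continuous_id)).continuousOn).mul
      (hf.sub hh)
  -- derivative of v at interior points
  have hderiv : ∀ x ∈ Set.Ioo 0 t, HasDerivAt v (ψ x) x := by
    intro x hx
    have hx0 : (0:ℝ) < x := hx.1
    have hnb : Set.Ioi (0:ℝ) ∈ nhds x := Ioi_mem_nhds hx0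
    have hint : IntervalIntegrable φ MeasureTheory.volume 0 x := by
      apply ContinuousOn.intervalIntegrable
      apply hφc.mono
      rw [Set.uIcc_of_le hx0.le]
      exact fun y hy => hy.1
    have hmeas : StronglyMeasurableAtFilter φ (nhds x) :=
      (hφc.mono (Set.Ioi_subset_Ici le_rfl)).stronglyMeasurableAtFilter isOpen_Ioi _ hx0
    have hca : ContinuousAt φ x :=
      (hφc.continuousAt (Ici_mem_nhds hx0))
    have hI : HasDerivAt (fun u => ∫ s in (0:ℝ)..u, φ s) (φ x) x :=
      intervalIntegral.integral_hasDerivAt_right hint hmeas hca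
    have hfh : HasDerivAt (fun u => f u - h u) (φ x) x := by
      have hI' : HasDerivAt (fun u => f 0 + ∫ s in (0:ℝ)..u, φ s) (φ x) x :=
        hI.const_add _
      refine hI'.congr_of_eventuallyEq ?_
      filter_upwards [hnb] with y hy
      have := heq y (le_of_lt hy)
      linarith
    have hexp : HasDerivAt (fun u : ℝ => Real.exp (-lam * u))
        (-lam * Real.exp (-lam * x)) x := by
      have h1 : HasDerivAt (fun u : ℝ => -lam * u) (-lam) x := by
        simpa using (hasDerivAt_id x).const_mul (-lam)
      simpa [mul_comm] using h1.exp
    have := hexp.mul hfh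
    exact this.congr_deriv (by simp only [hψ, hφ]; ring)
  have hintψ : IntervalIntegrable ψ MeasureTheory.volume 0 t := by
    apply ContinuousOn.intervalIntegrable
    apply hψc.mono
    rw [Set.uIcc_of_le ht]
    exact fun y hy => hy.1
  have key : ∫ s in (0:ℝ)..t, ψ s = v t - v 0 := by
    apply intervalIntegral.integral_eq_sub_of_hasDeriv_right_of_le ht
      (hvc.mono (fun y hy => hy.1))
      (fun x hx => (hderiv x hx).hasDerivWithinAt) hintψ
  have hv0 : v 0 = f 0 := by simp [hv, hh0]
  have hvt : v t = Real.exp (-lam * t) * (f t - h t) := rfl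
  rw [key, hv0, hvt]
  have : Real.exp (lam * t) * Real.exp (-lam * t) = 1 := by
    rw [← Real.exp_add]; ring_nf; exact Real.exp_zero
  have expand : Real.exp (lam * t) * (f 0 + (Real.exp (-lam * t) * (f t - h t) - f 0)) + h t
      = (Real.exp (lam * t) * Real.exp (-lam * t)) * (f t - h t) + h t := by ring
  rw [expand, this]; ring
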